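/- arXiv:2004.13196 — 2 statements merged into one kernel-verified Lean document; each statement's English description precedes it below -/
import Mathlib

section
/- For every integer n ≥ 3 and every integer k ≥ 0, the k-th moment of distance is I(n,k) = (1/((k+1)(k+2))) · [ (4/(k+3)) · (π/n)^{k+2} · ₁F₂(1; (k+4)/2, (k+5)/2; −π²/n²) + tan(π/n) · ( n · (π/2)^{k+1} · ₁F₂(1; (k+3)/2, (k+4)/2; −π²/4) − 2 · (π/n)^{k+1} · ₁F₂(1; (k+3)/2, (k+4)/2; −π²/n²) ) ]. -/
open MeasureTheory

/-- The `k`-th moment of distance on the homogeneous lens space `L(n;1)`,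
expressed as an explicit integral over a fundamental domain in join coordinates. -/
noncomputable def momentI (n k : ℕ) : ℝ :=
  ((n : ℝ) ^ 2 / (2 * Real.pi ^ 2)) *
    ∫ θ₂ in (-(Real.pi / n))..(Real.pi / n),
      ∫ θ₁ in (-(Real.pi / n))..(Real.pi / n),
        ∫ η in (0 : ℝ)..(Real.pi / 2),
          (Real.arccos (Real.cos θ₁ * Real.cos η)) ^ k * Real.cos η * Real.sin η

/-- The ascending Pochhammer symbol `(b)_j = b (b+1) ⋯ (b+j-1)`. -/
noncomputable def asc (b : ℝ) (j : ℕ) : ℝ := ∏ i ∈ Finset.range j, (b + i)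

/-- The generalized hypergeometric function `₁F₂(1; b₁, b₂; z) = ∑ z^j / ((b₁)_j (b₂)_j)`. -/
noncomputable def oneFtwo (b₁ b₂ z : ℝ) : ℝ := ∑' j : ℕ, z ^ j / (asc b₁ j * asc b₂ j)

open Real Nat

noncomputable def tl (m : ℕ) (y : ℝ) : ℝ := ∑' j : ℕ, (-1)^j * y^(m+2*j) / (m+2*j)!

lemma summable_tl (m : ℕ) (y : ℝ) :
    Summable (fun j : ℕ => (-1)^j * y^(m+2*j) / ((m+2*j)! : ℝ)) := by
  apply Summable.of_abs
  have h : Summable ((fun i : ℕ => |y|^i / (i ! : ℝ)) ∘ (fun j : ℕ => m + 2*j)) := by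
    apply (Real.summable_pow_div_factorial |y|).comp_injective
    intro a b hab
    simpa using hab
  apply h.congr
  intro j
  simp [Function.comp, abs_div, abs_pow, abs_of_nonneg, Nat.cast_nonneg, abs_mul]

lemma tl_zero (m : ℕ) (hm : 1 ≤ m) : tl m 0 = 0 := by
  unfold tl
  have : ∀ j : ℕ, (-1:ℝ)^j * (0:ℝ)^(m+2*j) / (m+2*j)! = 0 := by
    intro j
    rw [zero_pow (by omega)]
    simp
  rw [tsum_congr this, tsum_zero]

lemma tl_rec (m : ℕ) (y : ℝ) : tl m y = y^m/(m)! - tl (m+2) y := by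
  unfold tl
  rw [Summable.tsum_eq_zero_add (summable_tl m y)]
  have h1 : ∀ j : ℕ, (-1:ℝ)^(j+1) * y^(m+2*(j+1)) / (m+2*(j+1))!
      = -((-1)^j * y^((m+2)+2*j) / ((m+2)+2*j)!) := by
    intro j
    have : m + 2*(j+1) = (m+2) + 2*j := by ring
    rw [this, pow_succ]
    ring
  rw [tsum_congr h1, tsum_neg]
  simp
  ring

lemma hasDerivAt_tl (m : ℕ) (y : ℝ) :
    HasDerivAt (fun z => tl (m+1) z) (tl m y) y := by
  set R : ℝ := |y| + 1 with hR
  have hyR : y ∈ Set.Ioo (-R) R := by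
    constructor <;> cases abs_cases y <;> simp_all <;> linarith
  have := hasDerivAt_tsum_of_isPreconnected
    (u := fun j : ℕ => R^(m+2*j) / ((m+2*j)! : ℝ))
    (g := fun (j : ℕ) (z : ℝ) => (-1)^j * z^((m+1)+2*j) / ((m+1)+2*j)!)
    (g' := fun (j : ℕ) (z : ℝ) => (-1)^j * z^(m+2*j) / (m+2*j)!)
    ?_ (isOpen_Ioo (a := -R) (b := R)) ((convex_Ioo (-R) R).isPreconnected)
    ?_ ?_ hyR ?_ hyR
  · exact this
  · have h : Summable ((fun i : ℕ => R^i / (i ! : ℝ)) ∘ (fun j : ℕ => m + 2*j)) := by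
      apply (Real.summable_pow_div_factorial R).comp_injective
      intro a b hab
      simpa using hab
    exact h
  · intro j z _
    have hn : ((m+1)+2*j) - 1 = m + 2*j := by omega
    have hfac : (((m+1)+2*j)! : ℝ) = ((m+1)+2*j) * (m+2*j)! := by
      have : (m+1)+2*j = (m+2*j)+1 := by omega
      rw [this, Nat.factorial_succ]
      push_cast
      ring
    have h1 : ((m+2*j)! : ℝ) ≠ 0 := by exact_mod_cast Nat.factorial_ne_zero _
    have h2 : ((m+1)+2*j : ℝ) ≠ 0 := by positivity
    have h0 := (hasDerivAt_pow ((m+1)+2*j) z).const_mul ((-1:ℝ)^j / (((m+1)+2*j)! : ℝ))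
    rw [hn] at h0
    have hfe : (fun z : ℝ => (-1:ℝ)^j / (((m+1)+2*j)! : ℝ) * z^((m+1)+2*j))
        = fun z : ℝ => (-1:ℝ)^j * z^((m+1)+2*j) / (((m+1)+2*j)! : ℝ) := by
      funext t
      ring
    rw [hfe] at h0
    refine h0.congr_deriv ?_
    rw [hfac]
    push_cast
    field_simp
  · intro j z hz
    have hz1 : |z| ≤ R := by
      rw [abs_le]
      exact ⟨hz.1.le, hz.2.le⟩
    have hRnn : (0:ℝ) ≤ R := by positivity
    have hc : ‖(-1:ℝ)^j * z^(m+2*j) / (m+2*j)!‖ = |z|^(m+2*j) / ((m+2*j)! : ℝ) := by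
      rw [norm_div, norm_mul, norm_pow, norm_pow, norm_neg, norm_one, one_pow, one_mul]
      simp [Real.norm_eq_abs, abs_of_nonneg]
    rw [hc]
    show |z|^(m+2*j) / ((m+2*j)! : ℝ) ≤ R^(m+2*j) / ((m+2*j)! : ℝ)
    gcongr
  · exact summable_tl (m+1) y

noncomputable def gfun (k : ℕ) (t : ℝ) : ℝ :=
  ((k)! / 2^(k+2)) * (tl (k+2) π + Real.cos (2*t) * tl (k+2) (2*t) - Real.sin (2*t) * tl (k+1) (2*t))

lemma hasDerivAt_two_mul (t : ℝ) : HasDerivAt (fun s : ℝ => 2*s) 2 t := by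
  simpa using (hasDerivAt_id t).const_mul 2

lemma hasDerivAt_tl_two (m : ℕ) (t : ℝ) :
    HasDerivAt (fun s => tl (m+1) (2*s)) (2 * tl m (2*t)) t := by
  have h := (hasDerivAt_tl m (2*t)).comp t (hasDerivAt_two_mul t)
  refine h.congr_deriv ?_
  ring

lemma hasDerivAt_g (k : ℕ) (t : ℝ) :
    HasDerivAt (gfun k) (-(t^k * Real.sin t * Real.cos t)) t := by
  have hcos : HasDerivAt (fun s : ℝ => Real.cos (2*s)) (-Real.sin (2*t) * 2) t :=
    (Real.hasDerivAt_cos (2*t)).comp t (hasDerivAt_two_mul t)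
  have hsin : HasDerivAt (fun s : ℝ => Real.sin (2*s)) (Real.cos (2*t) * 2) t :=
    (Real.hasDerivAt_sin (2*t)).comp t (hasDerivAt_two_mul t)
  have h1 : HasDerivAt (fun s => Real.cos (2*s) * tl (k+2) (2*s))
      (-Real.sin (2*t) * 2 * tl (k+2) (2*t) + Real.cos (2*t) * (2 * tl (k+1) (2*t))) t :=
    hcos.mul (hasDerivAt_tl_two (k+1) t)
  have h2 : HasDerivAt (fun s => Real.sin (2*s) * tl (k+1) (2*s))
      (Real.cos (2*t) * 2 * tl (k+1) (2*t) + Real.sin (2*t) * (2 * tl k (2*t))) t :=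
    hsin.mul (hasDerivAt_tl_two k t)
  have h3 := (((hasDerivAt_const t (tl (k+2) π)).add h1).sub h2).const_mul
      (((k)! : ℝ) / 2^(k+2))
  have hrec : tl (k+2) (2*t) + tl k (2*t) = (2*t)^k / (k)! := by
    have := tl_rec k (2*t)
    linarith
  refine h3.congr_deriv ?_
  have hfac : ((k)! : ℝ) ≠ 0 := by exact_mod_cast Nat.factorial_ne_zero _
  have e : (0 + (-Real.sin (2*t) * 2 * tl (k+2) (2*t) + Real.cos (2*t) * (2 * tl (k+1) (2*t)))
      - (Real.cos (2*t) * 2 * tl (k+1) (2*t) + Real.sin (2*t) * (2 * tl k (2*t))))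
      = -2 * Real.sin (2*t) * (tl (k+2) (2*t) + tl k (2*t)) := by ring
  rw [e, hrec, Real.sin_two_mul, mul_pow]
  field_simp
  ring

noncomputable def Rt (k : ℕ) (x : ℝ) : ℝ :=
  ((k)! / 2^(k+2)) * (tl (k+3) (2*x) + Real.tan x * (tl (k+2) π - tl (k+2) (2*x)))

lemma Rt_zero (k : ℕ) : Rt k 0 = 0 := by
  unfold Rt
  rw [Real.tan_zero, mul_zero, zero_mul, tl_zero (k+3) (by omega)]
  simp

lemma hasDerivAt_Rt (k : ℕ) (x : ℝ) (hx : Real.cos x ≠ 0) :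
    HasDerivAt (Rt k) (gfun k x / Real.cos x ^ 2) x := by
  have htan : HasDerivAt Real.tan (1 / Real.cos x ^ 2) x := Real.hasDerivAt_tan hx
  have h1 : HasDerivAt (fun s => tl (k+3) (2*s)) (2 * tl (k+2) (2*x)) x :=
    hasDerivAt_tl_two (k+2) x
  have h2 : HasDerivAt (fun s => Real.tan s * (tl (k+2) π - tl (k+2) (2*s)))
      (1 / Real.cos x ^ 2 * (tl (k+2) π - tl (k+2) (2*x))
        + Real.tan x * (0 - 2 * tl (k+1) (2*x))) x :=
    htan.mul ((hasDerivAt_const x (tl (k+2) π)).sub (hasDerivAt_tl_two (k+1) x))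
  have h3 := (h1.add h2).const_mul (((k)! : ℝ) / 2^(k+2))
  refine h3.congr_deriv ?_
  unfold gfun
  rw [Real.tan_eq_sin_div_cos, Real.cos_two_mul, Real.sin_two_mul]
  field_simp
  ring

lemma continuous_gfun (k : ℕ) : Continuous (gfun k) := by
  rw [continuous_iff_continuousAt]
  exact fun t => (hasDerivAt_g k t).continuousAt

lemma hasDerivAt_conv {f g : ℝ → ℝ} {f' g' x : ℝ} (h : HasDerivAt g g' x) (hf : f = g)
    (hd : f' = g') : HasDerivAt f f' x := hf ▸ hd ▸ h

lemma inner_integral (k : ℕ) (θ : ℝ) (hθ : |θ| ≤ π/3) :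
    ∫ η in (0:ℝ)..(π/2), (Real.arccos (Real.cos θ * Real.cos η)) ^ k * Real.cos η * Real.sin η
      = gfun k |θ| / Real.cos θ ^ 2 := by
  set c := Real.cos θ with hc
  have hπ := Real.pi_pos
  have hθ2 : |θ| < π/2 := lt_of_le_of_lt hθ (by linarith)
  have hcpos : 0 < c := Real.cos_pos_of_mem_Ioo ⟨by cases abs_cases θ <;> linarith, by cases abs_cases θ <;> linarith⟩
  have hcle : c ≤ 1 := Real.cos_le_one θ
  have hc2 : (c:ℝ)^2 ≠ 0 := by positivity
  -- the antiderivative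
  set F : ℝ → ℝ := fun η => -gfun k (Real.arccos (c * Real.cos η)) / c^2 with hF
  have hFcont : ContinuousOn F (Set.Icc 0 (π/2)) := by
    apply Continuous.continuousOn
    exact (((continuous_gfun k).comp (Real.continuous_arccos.comp
      (continuous_const.mul Real.continuous_cos))).neg).div_const _
  have hderiv : ∀ η ∈ Set.Ioo (0:ℝ) (π/2), HasDerivAt F
      ((Real.arccos (c * Real.cos η)) ^ k * Real.cos η * Real.sin η) η := by
    intro η hη
    have hcosη : 0 < Real.cos η := Real.cos_pos_of_mem_Ioo ⟨by linarith [hη.1], hη.2⟩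
    have hcosη1 : Real.cos η < 1 := by
      have := Real.cos_lt_cos_of_nonneg_of_le_pi (le_refl 0) (by linarith [hη.2] : η ≤ π) hη.1
      rwa [Real.cos_zero] at this
    set u := c * Real.cos η with hu
    have hu0 : 0 < u := by positivity
    have hu1 : u < 1 := by nlinarith
    have hune1 : u ≠ 1 := ne_of_lt hu1
    have hunem1 : u ≠ -1 := by linarith
    have hsq : 0 < 1 - u^2 := by nlinarith
    have hsqrt : Real.sqrt (1 - u^2) ≠ 0 := by positivity
    have hinner : HasDerivAt (fun η => c * Real.cos η) (c * -Real.sin η) η :=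
      (Real.hasDerivAt_cos η).const_mul c
    have harc := (Real.hasDerivAt_arccos hunem1 hune1).comp η hinner
    have hgd := (hasDerivAt_g k (Real.arccos u)).comp η harc
    have h := (hgd.div_const (c^2)).neg
    refine hasDerivAt_conv h ?_ ?_
    · funext s
      simp only [hF, Function.comp, Pi.neg_apply]
      ring
    · rw [Real.sin_arccos, Real.cos_arccos (by linarith) (by linarith)]
      field_simp
      ring
  have hInt : IntervalIntegrable
      (fun η => (Real.arccos (c * Real.cos η)) ^ k * Real.cos η * Real.sin η)
      volume 0 (π/2) := by
    apply Continuous.intervalIntegrable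
    exact (((Real.continuous_arccos.comp
      (continuous_const.mul Real.continuous_cos)).pow k).mul Real.continuous_cos).mul
      Real.continuous_sin
  have heval := intervalIntegral.integral_eq_sub_of_hasDeriv_right_of_le (by linarith)
    hFcont (fun η hη => (hderiv η hη).hasDerivWithinAt) hInt
  rw [heval]
  have e1 : F (π/2) = 0 := by
    have : c * Real.cos (π/2) = 0 := by rw [Real.cos_pi_div_two]; ring
    rw [hF]
    simp only [this, Real.arccos_zero]
    have hg0 : gfun k (π/2) = 0 := by
      unfold gfun
      rw [show 2 * (π/2) = π from by ring, Real.cos_pi, Real.sin_pi]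
      ring
    rw [hg0]
    simp
  have e2 : F 0 = -gfun k |θ| / c^2 := by
    rw [hF]
    simp only [Real.cos_zero, mul_one]
    rw [show c = Real.cos |θ| from by rw [hc, Real.cos_abs],
      Real.arccos_cos (abs_nonneg θ) (by linarith)]
  rw [e1, e2]
  ring

lemma mid_integrable (k : ℕ) (b c : ℝ) (hb : b ∈ Set.Icc (-(π/3)) (π/3))
    (hc : c ∈ Set.Icc (-(π/3)) (π/3)) :
    IntervalIntegrable (fun θ => gfun k |θ| / Real.cos θ ^ 2) volume b c := by
  apply ContinuousOn.intervalIntegrable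
  apply ContinuousOn.div
  · exact ((continuous_gfun k).comp continuous_abs).continuousOn
  · exact (Real.continuous_cos.pow 2).continuousOn
  · intro x hx
    have hπ := Real.pi_pos
    have hx1 : -(π/2) < x ∧ x < π/2 := by
      rcases Set.mem_uIcc.1 hx with h | h
      · constructor <;> [linarith [h.1, hb.1]; linarith [h.2, hc.2, hb.2]]
      · constructor <;> [linarith [h.1, hc.1]; linarith [h.2, hb.2, hc.2]]
    exact pow_ne_zero 2 (ne_of_gt (Real.cos_pos_of_mem_Ioo ⟨hx1.1, hx1.2⟩))

lemma mid_integral (k : ℕ) (a : ℝ) (ha : 0 < a) (ha3 : a ≤ π/3) :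
    ∫ θ in (-a)..a, gfun k |θ| / Real.cos θ ^ 2 = 2 * Rt k a := by
  have hπ := Real.pi_pos
  have hmem : ∀ x ∈ Set.Icc (-a) a, x ∈ Set.Icc (-(π/3)) (π/3) := by
    intro x hx
    exact ⟨by linarith [hx.1], by linarith [hx.2]⟩
  have hmema : a ∈ Set.Icc (-(π/3)) (π/3) := ⟨by linarith, ha3⟩
  have hmem0 : (0:ℝ) ∈ Set.Icc (-(π/3)) (π/3) := ⟨by linarith, by linarith⟩
  have hmemna : -a ∈ Set.Icc (-(π/3)) (π/3) := ⟨by linarith, by linarith⟩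
  have hsplit := intervalIntegral.integral_add_adjacent_intervals
    (mid_integrable k (-a) 0 hmemna hmem0) (mid_integrable k 0 a hmem0 hmema)
  rw [← hsplit]
  have hneg : ∫ θ in (-a)..(0:ℝ), gfun k |θ| / Real.cos θ ^ 2
      = ∫ θ in (0:ℝ)..a, gfun k |θ| / Real.cos θ ^ 2 := by
    have h := intervalIntegral.integral_comp_neg (a := (0:ℝ)) (b := a)
      (fun θ => gfun k |θ| / Real.cos θ ^ 2)
    simp only [neg_zero] at h
    rw [← h]
    apply intervalIntegral.integral_congr
    intro x _
    simp [abs_neg, Real.cos_neg]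
  have hhalf : ∫ θ in (0:ℝ)..a, gfun k |θ| / Real.cos θ ^ 2 = Rt k a := by
    have hcongr : Set.EqOn (fun θ => gfun k |θ| / Real.cos θ ^ 2)
        (fun θ => gfun k θ / Real.cos θ ^ 2) (Set.uIcc 0 a) := by
      intro x hx
      rw [Set.uIcc_of_le ha.le] at hx
      simp only
      rw [abs_of_nonneg hx.1]
    rw [intervalIntegral.integral_congr hcongr]
    have heval := intervalIntegral.integral_eq_sub_of_hasDerivAt
      (f := Rt k) (f' := fun θ => gfun k θ / Real.cos θ ^ 2)
      (a := 0) (b := a) ?_ ?_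
    · rw [heval, Rt_zero, sub_zero]
    · intro x hx
      apply hasDerivAt_Rt
      rw [Set.uIcc_of_le ha.le] at hx
      exact ne_of_gt (Real.cos_pos_of_mem_Ioo ⟨by linarith [hx.1], by linarith [hx.2]⟩)
    · apply ContinuousOn.intervalIntegrable
      apply ContinuousOn.div ((continuous_gfun k).continuousOn)
        ((Real.continuous_cos.pow 2).continuousOn)
      intro x hx
      rw [Set.uIcc_of_le ha.le] at hx
      exact pow_ne_zero 2 (ne_of_gt (Real.cos_pos_of_mem_Ioo
        ⟨by linarith [hx.1], by linarith [hx.2]⟩))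
  rw [hneg, hhalf]
  ring

lemma asc_asc (m j : ℕ) :
    asc (((m:ℝ)+3)/2) j * asc (((m:ℝ)+4)/2) j * 4^j * ((m+2)! : ℝ)
      = ((m+2*j+2)! : ℝ) := by
  induction j with
  | zero => simp [asc]
  | succ j ih =>
    have h1 : asc (((m:ℝ)+3)/2) (j+1) = asc (((m:ℝ)+3)/2) j * (((m:ℝ)+3)/2 + j) :=
      Finset.prod_range_succ _ _
    have h2 : asc (((m:ℝ)+4)/2) (j+1) = asc (((m:ℝ)+4)/2) j * (((m:ℝ)+4)/2 + j) :=
      Finset.prod_range_succ _ _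
    have h3 : ((m+2*(j+1)+2)! : ℝ) = ((m+2*j+2)! : ℝ) * ((m:ℝ)+2*j+3) * ((m:ℝ)+2*j+4) := by
      have e1 : m+2*(j+1)+2 = (m+2*j+3)+1 := by omega
      have e2 : m+2*j+3 = (m+2*j+2)+1 := by omega
      rw [e1, Nat.factorial_succ, e2, Nat.factorial_succ]
      push_cast
      ring
    rw [h1, h2, h3, ← ih]
    ring

lemma oneFtwo_eq (m : ℕ) (x : ℝ) (hx : x ≠ 0) :
    (∑' j : ℕ, (-x^2) ^ j / (asc (((m:ℝ)+3)/2) j * asc (((m:ℝ)+4)/2) j))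
      = ((m+2)! : ℝ) / (2*x)^(m+2) * tl (m+2) (2*x) := by
  have hterm : ∀ j : ℕ, (-x^2) ^ j / (asc (((m:ℝ)+3)/2) j * asc (((m:ℝ)+4)/2) j)
      = ((m+2)! : ℝ) / (2*x)^(m+2)
        * ((-1)^j * (2*x)^((m+2)+2*j) / (((m+2)+2*j)! : ℝ)) := by
    intro j
    have hfj : ((m+2*j+2)! : ℝ) ≠ 0 := by exact_mod_cast Nat.factorial_ne_zero _
    have hfm : ((m+2)! : ℝ) ≠ 0 := by exact_mod_cast Nat.factorial_ne_zero _
    have h4 : (4:ℝ)^j ≠ 0 := by positivity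
    have hA : asc (((m:ℝ)+3)/2) j * asc (((m:ℝ)+4)/2) j
        = ((m+2*j+2)! : ℝ) / (4^j * ((m+2)! : ℝ)) := by
      rw [← asc_asc m j]
      field_simp
    have hidx : (m+2)+2*j = m+2*j+2 := by omega
    rw [hA, hidx]
    rw [div_div_eq_mul_div]
    have hp1 : (2*x)^(m+2*j+2) = (2*x)^(m+2) * ((2*x)^2)^j := by
      rw [← pow_mul, ← pow_add]
      congr 1
      omega
    have hp2 : (-x^2 : ℝ)^j = (-1:ℝ)^j * (x^2)^j := by
      rw [neg_pow]
    rw [hp1, hp2]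
    have h2x : (2*x)^(m+2) ≠ 0 := pow_ne_zero _ (by simpa using hx)
    field_simp
    ring
  rw [tsum_congr hterm, tsum_mul_left]
  rfl
theorem moment_formula (n k : ℕ) (hn : 3 ≤ n) :
    momentI n k =
      (1 / (((k : ℝ) + 1) * ((k : ℝ) + 2))) *
        ( (4 / ((k : ℝ) + 3)) * (Real.pi / n) ^ (k + 2)
            * oneFtwo (((k : ℝ) + 4) / 2) (((k : ℝ) + 5) / 2) (-(Real.pi ^ 2 / n ^ 2))
          + Real.tan (Real.pi / n) *
            ( (n : ℝ) * (Real.pi / 2) ^ (k + 1)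
                * oneFtwo (((k : ℝ) + 3) / 2) (((k : ℝ) + 4) / 2) (-(Real.pi ^ 2 / 4))
              - 2 * (Real.pi / n) ^ (k + 1)
                * oneFtwo (((k : ℝ) + 3) / 2) (((k : ℝ) + 4) / 2) (-(Real.pi ^ 2 / n ^ 2)) ) ) := by
  have hπ := Real.pi_pos
  have hn0 : (0:ℝ) < (n:ℝ) := by positivity
  have hn3 : (3:ℝ) ≤ (n:ℝ) := by exact_mod_cast hn
  have ha : 0 < π / (n:ℝ) := by positivity
  have ha3 : π / (n:ℝ) ≤ π / 3 := by
    apply div_le_div_of_nonneg_left hπ.le (by norm_num) hn3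
  -- evaluate the triple integral
  have hmid : (∫ θ₁ in (-(π/(n:ℝ)))..(π/(n:ℝ)), ∫ η in (0:ℝ)..(π/2),
      (Real.arccos (Real.cos θ₁ * Real.cos η)) ^ k * Real.cos η * Real.sin η)
      = 2 * Rt k (π/(n:ℝ)) := by
    rw [intervalIntegral.integral_congr
      (g := fun θ => gfun k |θ| / Real.cos θ ^ 2) ?_]
    · exact mid_integral k _ ha ha3
    · intro θ hθ
      apply inner_integral
      rw [Set.uIcc_of_le (by linarith)] at hθ
      rw [abs_le]
      exact ⟨by linarith [hθ.1], by linarith [hθ.2]⟩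
  unfold momentI
  rw [hmid, intervalIntegral.integral_const]
  -- rewrite the hypergeometric functions
  have hx2 : (π/(n:ℝ))^2 = π^2/(n:ℝ)^2 := by rw [div_pow]
  have hx2' : (π/2)^2 = π^2/4 := by rw [div_pow]; norm_num
  have h1 : oneFtwo (((k:ℝ)+4)/2) (((k:ℝ)+5)/2) (-(π^2/(n:ℝ)^2))
      = ((k+3)! : ℝ) / (2*(π/(n:ℝ)))^(k+3) * tl (k+3) (2*(π/(n:ℝ))) := by
    have h := oneFtwo_eq (k+1) (π/(n:ℝ)) (ne_of_gt ha)
    rw [show (((k+1:ℕ):ℝ)+3)/2 = ((k:ℝ)+4)/2 from by push_cast; ring,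
      show (((k+1:ℕ):ℝ)+4)/2 = ((k:ℝ)+5)/2 from by push_cast; ring, hx2] at h
    rw [show (k+1)+2 = k+3 from by omega] at h
    exact h
  have h2 : oneFtwo (((k:ℝ)+3)/2) (((k:ℝ)+4)/2) (-(π^2/4))
      = ((k+2)! : ℝ) / π^(k+2) * tl (k+2) π := by
    have h := oneFtwo_eq k (π/2) (by positivity)
    rw [hx2', show 2*(π/2) = π from by ring] at h
    exact h
  have h3 : oneFtwo (((k:ℝ)+3)/2) (((k:ℝ)+4)/2) (-(π^2/(n:ℝ)^2))
      = ((k+2)! : ℝ) / (2*(π/(n:ℝ)))^(k+2) * tl (k+2) (2*(π/(n:ℝ))) := by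
    have h := oneFtwo_eq k (π/(n:ℝ)) (ne_of_gt ha)
    rw [hx2] at h
    exact h
  rw [h1, h2, h3]
  unfold Rt
  -- final algebra
  have hf : ((k)! : ℝ) ≠ 0 := by exact_mod_cast Nat.factorial_ne_zero _
  have hf2 : ((k+2)! : ℝ) = ((k:ℝ)+2)*((k:ℝ)+1)*((k)! : ℝ) := by
    rw [show k+2 = (k+1)+1 from rfl, Nat.factorial_succ, Nat.factorial_succ]
    push_cast
    ring
  have hf3 : ((k+3)! : ℝ) = ((k:ℝ)+3)*((k:ℝ)+2)*((k:ℝ)+1)*((k)! : ℝ) := by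
    have e : (k+3)! = (k+3) * (k+2)! := by
      rw [show k+3 = (k+2)+1 from rfl, Nat.factorial_succ]
    rw [e]
    push_cast [hf2]
    ring
  rw [hf2, hf3]
  have hk1 : ((k:ℝ)+1) ≠ 0 := by positivity
  have hk2 : ((k:ℝ)+2) ≠ 0 := by positivity
  have hk3 : ((k:ℝ)+3) ≠ 0 := by positivity
  have hπn : (0:ℝ) < π/(n:ℝ) := ha
  have hpow1 : (2*(π/(n:ℝ)))^(k+3) = 2^(k+3) * (π/(n:ℝ))^(k+3) := by rw [mul_pow]
  have hpow2 : (2*(π/(n:ℝ)))^(k+2) = 2^(k+2) * (π/(n:ℝ))^(k+2) := by rw [mul_pow]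
  have hpow3 : (π/(n:ℝ))^(k+3) = (π/(n:ℝ))^(k+1) * (π/(n:ℝ))^2 := by
    rw [← pow_add]
  have hpow4 : (π/(n:ℝ))^(k+2) = (π/(n:ℝ))^(k+1) * (π/(n:ℝ)) := by rw [pow_succ]
  have hpow5 : (π/2)^(k+1) = π^(k+1)/2^(k+1) := by rw [div_pow]
  have hpow6 : π^(k+2) = π^(k+1) * π := by rw [pow_succ]
  have hpownz : (π/(n:ℝ))^(k+1) ≠ 0 := by positivity
  have hπk : (π:ℝ)^(k+1) ≠ 0 := by positivity
  have h2k : (2:ℝ)^(k+1) ≠ 0 := by positivity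
  rw [hpow1, hpow2, hpow3, hpow4, hpow5, hpow6]
  rw [show (2:ℝ)^(k+3) = 2^(k+1)*4 from by ring,
    show (2:ℝ)^(k+2) = 2^(k+1)*2 from by ring, hx2]
  have hn0' : (n:ℝ) ≠ 0 := ne_of_gt hn0
  field_simp
  ring_nf
  have e1 : (n:ℝ) * (n:ℝ)⁻¹ = 1 := mul_inv_cancel₀ hn0'
  have e2 : (2:ℝ)⁻¹ ^ k * 2 ^ k = 1 := by rw [← mul_pow, inv_mul_cancel₀ two_ne_zero, one_pow]
  linear_combination ((2:ℝ)⁻¹ ^ k * 2 ^ k * ((k ! : ℝ) * π * 2 * (tl (3 + k) (π * (n:ℝ)⁻¹ * 2) + tan (π * (n:ℝ)⁻¹) * tl (2 + k) π - tan (π * (n:ℝ)⁻¹) * tl (2 + k) (π * (n:ℝ)⁻¹ * 2)))) * e1 + ((k ! : ℝ) * π * 2 * (tl (3 + k) (π * (n:ℝ)⁻¹ * 2) + tan (π * (n:ℝ)⁻¹) * tl (2 + k) π - tan (π * (n:ℝ)⁻¹) * tl (2 + k) (π * (n:ℝ)⁻¹ * 2))) * e2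
end

section
/- For every integer k ≥ 0, the k-th moment of distance on L(2;1) = ℝP³ is I(2,k) = (1/(k+1)) · (π/2)^k · [ 2 · ₁F₂(1; (k+3)/2, (k+4)/2; −π²/4) + (π²/((k+2)(k+3))) · ( ₁F₂(1; (k+4)/2, (k+5)/2; −π²/4) − (4/(k+4)) · ₁F₂(2; (k+5)/2, (k+6)/2; −π²/4) ) ]. -/
open MeasureTheory

/-- The generalized hypergeometric function `₁F₂(2; b₁, b₂; z)`. -/
noncomputable def twoFtwo (b₁ b₂ z : ℝ) : ℝ :=
  ∑' j : ℕ, ((j : ℝ) + 1) * z ^ j / (asc b₁ j * asc b₂ j)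


open Real Set intervalIntegral


noncomputable def gk (k : ℕ) : ℝ → ℝ := fun φ => φ ^ k * Real.sin φ * Real.cos φ

lemma gk_cont (k : ℕ) : Continuous (gk k) := by unfold gk; fun_prop

noncomputable def Fk (k : ℕ) (θ : ℝ) : ℝ := ∫ φ in θ..(π/2), gk k φ

lemma inner_eq (k : ℕ) {θ : ℝ} (hθ : θ ∈ Set.Ioo 0 (π/2)) :
    (∫ η in (0:ℝ)..(π/2), Real.arccos (Real.cos θ * Real.cos η) ^ k * Real.cos η * Real.sin η)
      = (1 / Real.cos θ ^ 2) * Fk k θ := by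
  have hπ := pi_pos
  obtain ⟨hθ0, hθK⟩ := hθ
  set c := Real.cos θ with hc
  have hc0 : 0 < c := Real.cos_pos_of_mem_Ioo ⟨by linarith, hθK⟩
  have hc1 : c < 1 := by
    have := Real.cos_lt_cos_of_nonneg_of_le_pi le_rfl (by linarith) hθ0
    simpa using this
  have hkey : ∀ η : ℝ, 0 < 1 - (c * Real.cos η) ^ 2 := by
    intro η
    have h1 : (c * Real.cos η) ^ 2 ≤ c ^ 2 * 1 := by
      rw [mul_pow]
      have := Real.cos_sq_le_one η
      nlinarith [sq_nonneg c]
    nlinarith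
  have hsq : ∀ η : ℝ, Real.sqrt (1 - (c * Real.cos η) ^ 2) ≠ 0 := by
    intro η
    exact ne_of_gt (Real.sqrt_pos.2 (hkey η))
  set f : ℝ → ℝ := fun η => Real.arccos (c * Real.cos η) with hf
  set f' : ℝ → ℝ := fun η => c * Real.sin η / Real.sqrt (1 - (c * Real.cos η) ^ 2) with hf'
  have hmem : ∀ η : ℝ, -1 < c * Real.cos η ∧ c * Real.cos η < 1 := by
    intro η
    constructor <;> nlinarith [hkey η, neg_one_le_cos η, cos_le_one η, sq_nonneg (c * Real.cos η)]
  have hderiv : ∀ η ∈ uIcc (0:ℝ) (π/2), HasDerivAt f (f' η) η := by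
    intro η _
    have h1 : HasDerivAt (fun η : ℝ => c * Real.cos η) (c * (-Real.sin η)) η :=
      (Real.hasDerivAt_cos η).const_mul c
    have h2 := (Real.hasDerivAt_arccos (ne_of_gt (hmem η).1) (ne_of_lt (hmem η).2)).comp η h1
    refine h2.congr_deriv ?_
    field_simp [hf']
    simp only [hf', mul_pow]
  have hcont : ContinuousOn f' (uIcc (0:ℝ) (π/2)) := by
    apply Continuous.continuousOn
    apply Continuous.div (by fun_prop) (by fun_prop)
    intro η
    exact hsq η
  have hsub := integral_comp_smul_deriv hderiv hcont (gk_cont k)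
  have hf0 : f 0 = θ := by
    simp only [hf, Real.cos_zero, mul_one]
    exact Real.arccos_cos hθ0.le (by linarith)
  have hfK : f (π/2) = π/2 := by
    simp [hf, Real.cos_pi_div_two]
  rw [hf0, hfK] at hsub
  have heq : ∀ η : ℝ, f' η • (gk k ∘ f) η
      = c ^ 2 * (Real.arccos (c * Real.cos η) ^ k * Real.cos η * Real.sin η) := by
    intro η
    have h1 : Real.sin (f η) = Real.sqrt (1 - (c * Real.cos η) ^ 2) := Real.sin_arccos _
    have h2 : Real.cos (f η) = c * Real.cos η :=
      Real.cos_arccos (by linarith [(hmem η).1]) (by linarith [(hmem η).2])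
    simp only [smul_eq_mul, Function.comp, gk, h1, h2]
    simp only [hf', hf]
    rw [div_mul_eq_mul_div, div_eq_iff (hsq η)]
    ring
  rw [intervalIntegral.integral_congr (g := fun η => c ^ 2 *
      (Real.arccos (c * Real.cos η) ^ k * Real.cos η * Real.sin η)) (fun η _ => heq η)] at hsub
  rw [intervalIntegral.integral_const_mul] at hsub
  have hc2 : c ^ 2 ≠ 0 := by positivity
  simp only [Fk]
  rw [← hsub]
  field_simp
lemma Fk_eq (k : ℕ) : Fk k = fun θ => (∫ φ in (0:ℝ)..(π/2), gk k φ) - ∫ φ in (0:ℝ)..θ, gk k φ := by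
  funext θ
  have h := intervalIntegral.integral_add_adjacent_intervals (μ := volume)
    ((gk_cont k).intervalIntegrable 0 θ) ((gk_cont k).intervalIntegrable θ (π/2))
  rw [Fk, ← h]; ring

lemma Fk_deriv (k : ℕ) (θ : ℝ) : HasDerivAt (Fk k) (-(gk k θ)) θ := by
  rw [Fk_eq]
  have h : HasDerivAt (fun u => ∫ φ in (0:ℝ)..u, gk k φ) (gk k θ) θ :=
    intervalIntegral.integral_hasDerivAt_right ((gk_cont k).intervalIntegrable 0 θ)
      ((gk_cont k).stronglyMeasurableAtFilter volume (nhds θ)) (gk_cont k).continuousAt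
  have h2 := (hasDerivAt_const θ (∫ φ in (0:ℝ)..(π/2), gk k φ)).sub h
  rw [zero_sub] at h2
  exact h2

lemma Fk_cont (k : ℕ) : Continuous (Fk k) := by
  rw [Fk_eq]
  exact continuous_const.sub
    (intervalIntegral.continuous_primitive (fun a b => (gk_cont k).intervalIntegrable a b) 0)

lemma Fk_pi_div_two (k : ℕ) : Fk k (π/2) = 0 := by simp [Fk]

lemma Fk_nonneg (k : ℕ) {θ : ℝ} (hθ : θ ∈ Icc (0:ℝ) (π/2)) : 0 ≤ Fk k θ := by
  apply intervalIntegral.integral_nonneg hθ.2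
  intro φ hφ
  have h0 : 0 ≤ φ := le_trans hθ.1 hφ.1
  have h1 : φ ≤ π := le_trans hφ.2 (by linarith [pi_pos])
  have := Real.sin_nonneg_of_nonneg_of_le_pi h0 h1
  have := Real.cos_nonneg_of_mem_Icc ⟨by linarith [pi_pos], hφ.2⟩
  simp only [gk]
  positivity

lemma sincos_int {θ : ℝ} : (∫ φ in θ..(π/2), Real.sin φ * Real.cos φ) = Real.cos θ ^ 2 / 2 := by
  have hd : ∀ φ ∈ uIcc θ (π/2), HasDerivAt (fun x => -(Real.cos x ^ 2) / 2)
      (Real.sin φ * Real.cos φ) φ := by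
    intro φ _
    have h := ((Real.hasDerivAt_cos φ).pow 2).neg.div_const 2
    refine h.congr_deriv ?_
    ring
  rw [intervalIntegral.integral_eq_sub_of_hasDerivAt hd
    ((Real.continuous_sin.mul Real.continuous_cos).intervalIntegrable _ _)]
  rw [Real.cos_pi_div_two]
  ring

lemma Fk_le (k : ℕ) {θ : ℝ} (hθ : θ ∈ Icc (0:ℝ) (π/2)) :
    Fk k θ ≤ (π/2) ^ k * (Real.cos θ ^ 2 / 2) := by
  rw [← sincos_int, ← intervalIntegral.integral_const_mul]
  apply intervalIntegral.integral_mono_on hθ.2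
    ((gk_cont k).intervalIntegrable _ _)
    ((by fun_prop : Continuous fun φ => (π/2)^k * (Real.sin φ * Real.cos φ)).intervalIntegrable _ _)
  intro φ hφ
  have h0 : 0 ≤ φ := le_trans hθ.1 hφ.1
  have hs : 0 ≤ Real.sin φ := Real.sin_nonneg_of_nonneg_of_le_pi h0 (by linarith [pi_pos, hφ.2])
  have hc : 0 ≤ Real.cos φ := Real.cos_nonneg_of_mem_Icc ⟨by linarith [pi_pos], hφ.2⟩
  have hp : φ ^ k ≤ (π/2) ^ k := pow_le_pow_left₀ h0 hφ.2 k
  simp only [gk]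
  calc φ ^ k * Real.sin φ * Real.cos φ ≤ (π/2)^k * Real.sin φ * Real.cos φ := by
        apply mul_le_mul_of_nonneg_right (mul_le_mul_of_nonneg_right hp hs) hc
    _ = (π/2)^k * (Real.sin φ * Real.cos φ) := by ring
lemma sec_integral (k : ℕ) :
    (∫ θ in (0:ℝ)..(π/2), (1 / Real.cos θ ^ 2) * Fk k θ)
      = ∫ θ in (0:ℝ)..(π/2), θ ^ k * Real.sin θ ^ 2 := by
  have hπ := pi_pos
  have hK : (0:ℝ) < π/2 := by linarith
  set A : ℝ → ℝ := fun θ => (1 / Real.cos θ ^ 2) * Fk k θ with hA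
  set B : ℝ → ℝ := fun θ => θ ^ k * Real.sin θ ^ 2 with hB
  have hBcont : Continuous B := by rw [hB]; fun_prop
  -- A is integrable on [0, π/2]
  have hAmeas : Measurable A := by
    apply Measurable.mul
    · exact measurable_const.div ((Real.measurable_cos).pow_const 2)
    · exact (Fk_cont k).measurable
  have hAbd : ∀ θ ∈ Icc (0:ℝ) (π/2), ‖A θ‖ ≤ (π/2)^k / 2 := by
    intro θ hθ
    rcases eq_or_lt_of_le hθ.2 with h | h
    · have : Real.cos θ = 0 := by rw [h, Real.cos_pi_div_two]
      simp only [hA, this]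
      simp
      positivity
    · have hcos : 0 < Real.cos θ := Real.cos_pos_of_mem_Ioo ⟨by linarith [hθ.1], h⟩
      have h1 : 0 ≤ A θ := by
        have := Fk_nonneg k hθ
        simp only [hA]
        positivity
      have h2 : A θ ≤ (π/2)^k / 2 := by
        have hle := Fk_le k hθ
        simp only [hA]
        rw [div_mul_eq_mul_div, one_mul, div_le_iff₀ (by positivity)]
        calc Fk k θ ≤ (π/2)^k * (Real.cos θ^2/2) := hle
          _ = (π/2)^k/2 * Real.cos θ^2 := by ring
      rw [Real.norm_eq_abs, abs_of_nonneg h1]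
      exact h2
  have hAint : IntegrableOn A (Icc (0:ℝ) (π/2)) volume := by
    apply Measure.integrableOn_of_bounded (M := (π/2)^k/2) (by simp) hAmeas.aestronglyMeasurable
    exact (ae_restrict_iff' measurableSet_Icc).2 (Filter.Eventually.of_forall hAbd)
  have hAii : IntervalIntegrable A volume 0 (π/2) := by
    apply MeasureTheory.IntegrableOn.intervalIntegrable
    rwa [uIcc_of_le hK.le]
  -- key identity for b < π/2
  have key : ∀ b ∈ Ioo (0:ℝ) (π/2),
      (∫ θ in (0:ℝ)..b, A θ) = Real.tan b * Fk k b + ∫ θ in (0:ℝ)..b, B θ := by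
    intro b hb
    have hcosb : ∀ θ ∈ Icc (0:ℝ) b, 0 < Real.cos θ := fun θ hθ =>
      Real.cos_pos_of_mem_Ioo ⟨by linarith [hθ.1], by linarith [hθ.2, hb.2]⟩
    have hd : ∀ θ ∈ uIcc (0:ℝ) b, HasDerivAt (fun x => Real.tan x * Fk k x) (A θ - B θ) θ := by
      intro θ hθ
      rw [uIcc_of_le hb.1.le] at hθ
      have hc := hcosb θ hθ
      have h1 := (Real.hasDerivAt_tan (ne_of_gt hc)).mul (Fk_deriv k θ)
      refine h1.congr_deriv ?_
      simp only [hA, hB, gk, Real.tan_eq_sin_div_cos]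
      field_simp
      ring
    have hABcont : ContinuousOn (fun θ => A θ - B θ) (uIcc (0:ℝ) b) := by
      apply ContinuousOn.sub _ hBcont.continuousOn
      apply ContinuousOn.mul _ (Fk_cont k).continuousOn
      apply ContinuousOn.div continuousOn_const (by fun_prop)
      intro θ hθ
      rw [uIcc_of_le hb.1.le] at hθ
      exact pow_ne_zero 2 (ne_of_gt (hcosb θ hθ))
    have hfts := intervalIntegral.integral_eq_sub_of_hasDerivAt hd
      (hABcont.intervalIntegrable)
    rw [Real.tan_zero, zero_mul, sub_zero] at hfts
    have hsplit : (∫ θ in (0:ℝ)..b, (A θ - B θ))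
        = (∫ θ in (0:ℝ)..b, A θ) - ∫ θ in (0:ℝ)..b, B θ := by
      apply intervalIntegral.integral_sub
      · apply MeasureTheory.IntegrableOn.intervalIntegrable
        exact hAint.mono_set (by rw [uIcc_of_le hb.1.le]; exact Icc_subset_Icc le_rfl hb.2.le)
      · exact hBcont.intervalIntegrable _ _
    rw [hsplit] at hfts
    linarith [hfts]
  -- filter
  set l : Filter ℝ := nhdsWithin (π/2) (Ioo (0:ℝ) (π/2)) with hl
  haveI hne : l.NeBot := by
    rw [hl, ← mem_closure_iff_nhdsWithin_neBot, closure_Ioo (ne_of_lt hK)]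
    exact ⟨hK.le, le_rfl⟩
  -- limits
  have T1 : Filter.Tendsto (fun b => ∫ θ in (0:ℝ)..b, A θ) l (nhds (∫ θ in (0:ℝ)..(π/2), A θ)) := by
    have hprim := intervalIntegral.continuousOn_primitive_interval' hAii
      (left_mem_uIcc (a := (0:ℝ)) (b := π/2))
    have := hprim (π/2) (right_mem_uIcc)
    exact this.mono_left (nhdsWithin_mono _ (by rw [uIcc_of_le hK.le]; exact Ioo_subset_Icc_self))
  have T3 : Filter.Tendsto (fun b => ∫ θ in (0:ℝ)..b, B θ) l
      (nhds (∫ θ in (0:ℝ)..(π/2), B θ)) := by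
    have := (intervalIntegral.continuous_primitive
      (fun a b => (hBcont.intervalIntegrable a b : IntervalIntegrable B volume a b)) 0).tendsto (π/2)
    exact this.mono_left nhdsWithin_le_nhds
  have T2 : Filter.Tendsto (fun b => Real.tan b * Fk k b) l (nhds 0) := by
    have hub : ∀ b ∈ Ioo (0:ℝ) (π/2), Real.tan b * Fk k b ≤ (π/2)^k * (Real.sin b * Real.cos b) / 2 := by
      intro b hb
      have hcos : 0 < Real.cos b := Real.cos_pos_of_mem_Ioo ⟨by linarith [hb.1], hb.2⟩
      have htan : 0 ≤ Real.tan b := Real.tan_nonneg_of_nonneg_of_le_pi_div_two hb.1.le hb.2.le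
      calc Real.tan b * Fk k b ≤ Real.tan b * ((π/2)^k * (Real.cos b^2/2)) :=
            mul_le_mul_of_nonneg_left (Fk_le k ⟨hb.1.le, hb.2.le⟩) htan
        _ = (π/2)^k * (Real.sin b * Real.cos b) / 2 := by
            rw [Real.tan_eq_sin_div_cos]; field_simp
    have hlb : ∀ b ∈ Ioo (0:ℝ) (π/2), 0 ≤ Real.tan b * Fk k b := by
      intro b hb
      have htan : 0 ≤ Real.tan b := Real.tan_nonneg_of_nonneg_of_le_pi_div_two hb.1.le hb.2.le
      exact mul_nonneg htan (Fk_nonneg k ⟨hb.1.le, hb.2.le⟩)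
    have hub' : Filter.Tendsto (fun b => (π/2)^k * (Real.sin b * Real.cos b) / 2) l (nhds 0) := by
      have hc : Continuous fun b => (π/2)^k * (Real.sin b * Real.cos b) / 2 := by fun_prop
      have := (hc.tendsto (π/2)).mono_left (nhdsWithin_le_nhds (s := Ioo (0:ℝ) (π/2)))
      simpa [Real.cos_pi_div_two] using this
    apply tendsto_of_tendsto_of_tendsto_of_le_of_le' tendsto_const_nhds hub'
    · filter_upwards [self_mem_nhdsWithin] using hlb
    · filter_upwards [self_mem_nhdsWithin] using hub
  have heq : ∀ᶠ b in l, (∫ θ in (0:ℝ)..b, A θ) = Real.tan b * Fk k b + ∫ θ in (0:ℝ)..b, B θ := by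
    filter_upwards [self_mem_nhdsWithin] using key
  have Tright : Filter.Tendsto (fun b => Real.tan b * Fk k b + ∫ θ in (0:ℝ)..b, B θ) l
      (nhds (0 + ∫ θ in (0:ℝ)..(π/2), B θ)) := T2.add T3
  have := tendsto_nhds_unique (T1.congr' heq) Tright
  rw [this, zero_add]
noncomputable def uI (m : ℕ) : ℝ := ∫ θ in (0:ℝ)..(π/2), θ ^ m * Real.sin (2*θ)
noncomputable def vI (m : ℕ) : ℝ := ∫ θ in (0:ℝ)..(π/2), θ ^ m * Real.cos (2*θ)

lemma rec1 (m : ℕ) : ((m:ℝ)+1) * uI m + 2 * vI (m+1) = 0 := by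
  have hd : ∀ θ ∈ uIcc (0:ℝ) (π/2), HasDerivAt (fun x => x^(m+1) * Real.sin (2*x))
      (((m:ℝ)+1) * (θ^m * Real.sin (2*θ)) + 2 * (θ^(m+1) * Real.cos (2*θ))) θ := by
    intro θ _
    have h1 : HasDerivAt (fun x : ℝ => x^(m+1)) (((m:ℝ)+1) * θ^m) θ := by
      simpa using hasDerivAt_pow (m+1) θ
    have h2 : HasDerivAt (fun x : ℝ => Real.sin (2*x)) (Real.cos (2*θ) * 2) θ :=
      (Real.hasDerivAt_sin (2*θ)).comp θ (by simpa using (hasDerivAt_id θ).const_mul (2:ℝ))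
    have := h1.mul h2
    refine this.congr_deriv ?_
    ring
  have hfts := intervalIntegral.integral_eq_sub_of_hasDerivAt hd
    ((by fun_prop : Continuous fun θ : ℝ =>
      ((m:ℝ)+1) * (θ^m * Real.sin (2*θ)) + 2 * (θ^(m+1) * Real.cos (2*θ))).intervalIntegrable _ _)
  have hval : ((π/2)^(m+1) * Real.sin (2*(π/2)) - 0^(m+1) * Real.sin (2*0)) = 0 := by
    rw [show 2*(π/2) = π by ring, Real.sin_pi]
    simp
  rw [hval] at hfts
  rw [intervalIntegral.integral_add
    (((by fun_prop : Continuous fun θ : ℝ => ((m:ℝ)+1) * (θ^m * Real.sin (2*θ)))).intervalIntegrable _ _)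
    (((by fun_prop : Continuous fun θ : ℝ => 2 * (θ^(m+1) * Real.cos (2*θ)))).intervalIntegrable _ _),
    intervalIntegral.integral_const_mul, intervalIntegral.integral_const_mul] at hfts
  exact hfts

lemma rec2 (m : ℕ) : ((m:ℝ)+1) * vI m - 2 * uI (m+1) = -((π/2)^(m+1)) := by
  have hd : ∀ θ ∈ uIcc (0:ℝ) (π/2), HasDerivAt (fun x => x^(m+1) * Real.cos (2*x))
      (((m:ℝ)+1) * (θ^m * Real.cos (2*θ)) - 2 * (θ^(m+1) * Real.sin (2*θ))) θ := by
    intro θ _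
    have h1 : HasDerivAt (fun x : ℝ => x^(m+1)) (((m:ℝ)+1) * θ^m) θ := by
      simpa using hasDerivAt_pow (m+1) θ
    have h2 : HasDerivAt (fun x : ℝ => Real.cos (2*x)) (-Real.sin (2*θ) * 2) θ :=
      (Real.hasDerivAt_cos (2*θ)).comp θ (by simpa using (hasDerivAt_id θ).const_mul (2:ℝ))
    have := h1.mul h2
    refine this.congr_deriv ?_
    ring
  have hfts := intervalIntegral.integral_eq_sub_of_hasDerivAt hd
    ((by fun_prop : Continuous fun θ : ℝ =>
      ((m:ℝ)+1) * (θ^m * Real.cos (2*θ)) - 2 * (θ^(m+1) * Real.sin (2*θ))).intervalIntegrable _ _)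
  have hval : ((π/2)^(m+1) * Real.cos (2*(π/2)) - 0^(m+1) * Real.cos (2*0)) = -((π/2)^(m+1)) := by
    rw [show 2*(π/2) = π by ring, Real.cos_pi]
    simp
  rw [hval] at hfts
  rw [intervalIntegral.integral_sub
    (((by fun_prop : Continuous fun θ : ℝ => ((m:ℝ)+1) * (θ^m * Real.cos (2*θ)))).intervalIntegrable _ _)
    (((by fun_prop : Continuous fun θ : ℝ => 2 * (θ^(m+1) * Real.sin (2*θ)))).intervalIntegrable _ _),
    intervalIntegral.integral_const_mul, intervalIntegral.integral_const_mul] at hfts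
  exact hfts

lemma rec3 (m : ℕ) : ((m:ℝ)+1) * ((m:ℝ)+2) * uI m = 2 * (π/2)^(m+2) - 4 * uI (m+2) := by
  have h1 := rec1 m
  have h2 := rec2 (m+1)
  push_cast at h2
  have h2' : ((m:ℝ)+2) * vI (m+1) - 2 * uI (m+2) = -((π/2)^(m+2)) := by
    convert h2 using 2 <;> push_cast <;> ring_nf
  linear_combination ((m:ℝ)+2) * h1 - 2 * h2'

lemma uI_bound (m : ℕ) : |uI m| ≤ (π/2)^(m+1) := by
  have hπ := pi_pos
  have hK : (0:ℝ) < π/2 := by linarith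
  have h1 : |uI m| ≤ ∫ θ in (0:ℝ)..(π/2), |θ^m * Real.sin (2*θ)| :=
    intervalIntegral.abs_integral_le_integral_abs hK.le
  have h2 : (∫ θ in (0:ℝ)..(π/2), |θ^m * Real.sin (2*θ)|) ≤ ∫ θ in (0:ℝ)..(π/2), ((π/2)^m : ℝ) := by
    apply intervalIntegral.integral_mono_on hK.le
    · exact ((by fun_prop : Continuous fun θ : ℝ => θ^m * Real.sin (2*θ)).abs).intervalIntegrable _ _
    · exact intervalIntegrable_const
    · intro θ hθ
      rw [abs_mul, abs_of_nonneg (pow_nonneg hθ.1 m)]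
      calc θ^m * |Real.sin (2*θ)| ≤ (π/2)^m * 1 :=
            mul_le_mul (pow_le_pow_left₀ hθ.1 hθ.2 m) (Real.abs_sin_le_one _)
              (abs_nonneg _) (by positivity)
        _ = (π/2)^m := mul_one _
  have h3 : (∫ θ in (0:ℝ)..(π/2), ((π/2)^m : ℝ)) = (π/2)^(m+1) := by
    rw [intervalIntegral.integral_const, smul_eq_mul, pow_succ]
    ring
  rw [h3] at h2
  linarith
noncomputable def aSer (k : ℕ) (j : ℕ) : ℝ :=
  2 * (-4:ℝ)^j * (π/2)^(k+2*j+3) * ((k+1).factorial : ℝ) / ((k+2*j+3).factorial : ℝ)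

lemma aSer_eq (k j : ℕ) :
    aSer k j = 2 * (π/2)^(k+3) * ((k+1).factorial : ℝ)
      * ((-(π^2))^j / ((k+2*j+3).factorial : ℝ)) := by
  unfold aSer
  have h1 : (-(π^2))^j = (-4:ℝ)^j * ((π/2)^2)^j := by
    rw [← mul_pow]
    congr 1
    ring
  rw [h1, ← pow_mul]
  rw [show k+2*j+3 = (k+3)+(2*j) by ring, pow_add, show 2*j = j*2 by ring]
  ring

noncomputable def rRem (k N : ℕ) : ℝ :=
  (-4:ℝ)^N * ((k+1).factorial : ℝ) / ((k+2*N+1).factorial : ℝ) * uI (k+2*N+1)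

lemma rRem_step (k N : ℕ) : rRem k N = aSer k N + rRem k (N+1) := by
  have h := rec3 (k+2*N+1)
  have hc : ((k+2*N+1 : ℕ):ℝ) = (k:ℝ)+2*N+1 := by push_cast; ring
  rw [hc] at h
  unfold rRem aSer
  have e2 : k+2*(N+1)+1 = (k+2*N+2)+1 := by ring
  have e3 : k+2*N+2 = (k+2*N+1)+1 := rfl
  have hfac : ((k+2*(N+1)+1).factorial : ℝ)
      = ((k+2*N+1).factorial : ℝ) * (((k:ℝ)+2*N+2) * ((k:ℝ)+2*N+3)) := by
    rw [e2, Nat.factorial_succ, e3, Nat.factorial_succ]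
    push_cast; ring
  have hne1 : ((k+2*N+1).factorial : ℝ) ≠ 0 := Nat.cast_ne_zero.2 (Nat.factorial_ne_zero _)
  have hne3 : ((k+2*N+3).factorial : ℝ) ≠ 0 := Nat.cast_ne_zero.2 (Nat.factorial_ne_zero _)
  have hne4 : ((k:ℝ)+2*N+2) ≠ 0 := by positivity
  have hne5 : ((k:ℝ)+2*N+3) ≠ 0 := by positivity
  have e4 : k+2*(N+1)+1 = k+2*N+3 := by ring
  have e5 : k+2*N+1+2 = k+2*N+3 := by ring
  rw [e4] at hfac ⊢
  rw [e5] at h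
  rw [hfac]
  generalize (π/2 : ℝ) = K at h ⊢
  field_simp
  linear_combination (((-4:ℝ))^N) * h

lemma rRem_zero (k : ℕ) : rRem k 0 = uI (k+1) := by
  unfold rRem
  have : k+2*0+1 = k+1 := by ring
  rw [this, pow_zero, one_mul, div_self (Nat.cast_ne_zero.2 (Nat.factorial_ne_zero _)), one_mul]

lemma telescope (k : ℕ) : ∀ N, uI (k+1) = (∑ j ∈ Finset.range N, aSer k j) + rRem k N := by
  intro N
  induction N with
  | zero => simp [rRem_zero]
  | succ n ih =>
    rw [Finset.sum_range_succ, ih, rRem_step k n]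
    ring

lemma rRem_tendsto (k : ℕ) : Filter.Tendsto (rRem k) Filter.atTop (nhds 0) := by
  have hπ := pi_pos
  have hK : (0:ℝ) < π/2 := by linarith
  have hb : ∀ N, ‖rRem k N‖ ≤ ((k+1).factorial : ℝ) * (π/2)^(k+2) * (π^(2*N) / ((2*N).factorial : ℝ)) := by
    intro N
    have hfle : ((2*N).factorial : ℝ) ≤ ((k+2*N+1).factorial : ℝ) :=
      Nat.cast_le.2 (Nat.factorial_le (by omega))
    have hfpos : (0:ℝ) < ((2*N).factorial : ℝ) := Nat.cast_pos.2 (Nat.factorial_pos _)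
    have hfpos2 : (0:ℝ) < ((k+2*N+1).factorial : ℝ) := Nat.cast_pos.2 (Nat.factorial_pos _)
    have hu := uI_bound (k+2*N+1)
    rw [Real.norm_eq_abs]
    unfold rRem
    rw [abs_mul, abs_div, abs_mul, abs_pow, abs_neg, abs_of_nonneg (by norm_num : (0:ℝ) ≤ 4),
      abs_of_nonneg hfpos2.le, abs_of_nonneg (Nat.cast_nonneg _)]
    calc (4:ℝ)^N * ((k+1).factorial : ℝ) / ((k+2*N+1).factorial : ℝ) * |uI (k+2*N+1)|
        ≤ (4:ℝ)^N * ((k+1).factorial : ℝ) / ((k+2*N+1).factorial : ℝ) * (π/2)^(k+2*N+1+1) := by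
          apply mul_le_mul_of_nonneg_left hu
          positivity
      _ ≤ (4:ℝ)^N * ((k+1).factorial : ℝ) / ((2*N).factorial : ℝ) * (π/2)^(k+2*N+2) := by
          apply mul_le_mul_of_nonneg_right _ (by positivity)
          apply div_le_div_of_nonneg_left (by positivity) hfpos hfle
      _ = ((k+1).factorial : ℝ) * (π/2)^(k+2) * (π^(2*N) / ((2*N).factorial : ℝ)) := by
          have h4 : (π:ℝ)^(2*N) = 4^N * ((π/2)^2)^N := by
            rw [pow_mul, ← mul_pow]
            congr 1
            ring
          rw [h4, show k+2*N+2 = (k+2)+2*N by ring, pow_add, pow_mul]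
          field_simp
  have h0 : Filter.Tendsto (fun N => ((k+1).factorial : ℝ) * (π/2)^(k+2)
      * (π^(2*N) / ((2*N).factorial : ℝ))) Filter.atTop (nhds 0) := by
    have h2N : Filter.Tendsto (fun N : ℕ => 2*N) Filter.atTop Filter.atTop := by
      apply Filter.tendsto_atTop_atTop_of_monotone (fun a b h => by omega)
      intro b; exact ⟨b, by omega⟩
    have := (FloorSemiring.tendsto_pow_div_factorial_atTop (π:ℝ)).comp h2N
    have h3 := this.const_mul (((k+1).factorial : ℝ) * (π/2)^(k+2))
    simpa using h3
  exact squeeze_zero_norm hb h0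

lemma uI_summable (k : ℕ) : Summable (aSer k) := by
  have hπ := pi_pos
  apply Summable.of_norm_bounded (g := fun j => (2 * (π/2)^(k+3) * ((k+1).factorial : ℝ))
    * (π^(2*j) / ((2*j).factorial : ℝ)))
  · apply Summable.mul_left
    have h2N : Function.Injective (fun j : ℕ => 2*j) := fun a b h => by
      have : 2*a = 2*b := h
      omega
    have := (Real.summable_pow_div_factorial (π:ℝ)).comp_injective h2N
    simpa [Function.comp_def] using this
  · intro j
    rw [aSer_eq, Real.norm_eq_abs]
    have hfle : ((2*j).factorial : ℝ) ≤ ((k+2*j+3).factorial : ℝ) :=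
      Nat.cast_le.2 (Nat.factorial_le (by omega))
    have hfpos : (0:ℝ) < ((2*j).factorial : ℝ) := Nat.cast_pos.2 (Nat.factorial_pos _)
    have h1 : |2 * (π/2)^(k+3) * ((k+1).factorial:ℝ) * ((-(π^2))^j / ((k+2*j+3).factorial:ℝ))|
        = 2 * (π/2)^(k+3) * ((k+1).factorial:ℝ) * ((π^2)^j / ((k+2*j+3).factorial:ℝ)) := by
      rw [abs_mul, abs_div, abs_pow, abs_neg, abs_of_nonneg (sq_nonneg π),
        abs_of_nonneg (show (0:ℝ) ≤ ((k+2*j+3).factorial:ℝ) from Nat.cast_nonneg _),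
        abs_of_nonneg (show (0:ℝ) ≤ 2 * (π/2)^(k+3) * ((k+1).factorial:ℝ) from by positivity)]
    rw [h1, show (π:ℝ)^(2*j) = (π^2)^j from pow_mul π 2 j]
    exact mul_le_mul_of_nonneg_left
      (div_le_div_of_nonneg_left (by positivity) hfpos hfle) (by positivity)
  
lemma uI_eq_tsum (k : ℕ) : uI (k+1) = ∑' j, aSer k j := by
  have hsum := uI_summable k
  have h1 := hsum.hasSum.tendsto_sum_nat
  have h2 : Filter.Tendsto (fun N => ∑ j ∈ Finset.range N, aSer k j) Filter.atTop
      (nhds (uI (k+1))) := by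
    have he : (fun N => ∑ j ∈ Finset.range N, aSer k j) = fun N => uI (k+1) - rRem k N :=
      funext fun N => by rw [telescope k N]; ring
    rw [he]
    simpa using tendsto_const_nhds.sub (rRem_tendsto k)
  exact (tendsto_nhds_unique h2 h1)
lemma asc_succ (b : ℝ) (j : ℕ) : asc b (j+1) = asc b j * (b + j) := Finset.prod_range_succ _ _

lemma asc_half_mul (b : ℝ) : ∀ j : ℕ, asc b j * asc (b + 1/2) j * 4^j = asc (2*b) (2*j) := by
  intro j
  induction j with
  | zero => simp [asc]
  | succ n ih =>
    have e1 : 2*(n+1) = (2*n+1)+1 := by ring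
    rw [e1, asc_succ, asc_succ, asc_succ, asc_succ, pow_succ]
    push_cast
    linear_combination (4*(b+(n:ℝ))*(b+1/2+(n:ℝ))) * ih

lemma asc_nat (n : ℕ) : ∀ j : ℕ, asc ((n:ℝ)+1) j * (n.factorial : ℝ) = ((n+j).factorial : ℝ) := by
  intro j
  induction j with
  | zero => simp [asc]
  | succ m ih =>
    rw [asc_succ, show n+(m+1) = (n+m)+1 from rfl, Nat.factorial_succ]
    push_cast
    linear_combination ((n:ℝ)+1+m) * ih

lemma asc_pair (n j : ℕ) :
    asc (((n:ℝ)+2)/2) j * asc (((n:ℝ)+3)/2) j * 4^j * ((n+1).factorial : ℝ)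
      = ((n+1+2*j).factorial : ℝ) := by
  have h1 : (((n:ℝ)+3)/2) = ((n:ℝ)+2)/2 + 1/2 := by ring
  have h2 : (2:ℝ) * (((n:ℝ)+2)/2) = ((n+1 : ℕ):ℝ) + 1 := by push_cast; ring
  rw [h1, asc_half_mul, h2, asc_nat (n+1) (2*j)]

lemma asc_pair_ne (n j : ℕ) : asc (((n:ℝ)+2)/2) j * asc (((n:ℝ)+3)/2) j
    = ((n+1+2*j).factorial : ℝ) / (4^j * ((n+1).factorial : ℝ)) := by
  rw [eq_div_iff (by positivity), ← asc_pair n j]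
  ring

lemma pow_z_four (j : ℕ) : (-(π^2/4):ℝ)^j * 4^j = (-(π^2))^j := by
  rw [← mul_pow]; norm_num

lemma oneFtwo_eq_s7 (n : ℕ) : oneFtwo (((n:ℝ)+2)/2) (((n:ℝ)+3)/2) (-(π^2/4))
    = ∑' j : ℕ, (-(π^2))^j * ((n+1).factorial : ℝ) / ((n+1+2*j).factorial : ℝ) := by
  unfold oneFtwo
  apply tsum_congr
  intro j
  rw [asc_pair_ne n j, div_div_eq_mul_div, ← pow_z_four j]
  ring

lemma twoFtwo_eq (n : ℕ) : twoFtwo (((n:ℝ)+2)/2) (((n:ℝ)+3)/2) (-(π^2/4))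
    = ∑' j : ℕ, ((j:ℝ)+1) * (-(π^2))^j * ((n+1).factorial : ℝ) / ((n+1+2*j).factorial : ℝ) := by
  unfold twoFtwo
  apply tsum_congr
  intro j
  rw [asc_pair_ne n j, div_div_eq_mul_div, ← pow_z_four j]
  ring

lemma summable_pi_fac : Summable (fun j : ℕ => (π:ℝ)^(2*j) / ((2*j).factorial : ℝ)) := by
  have h2N : Function.Injective (fun j : ℕ => 2*j) := fun a b h => by
    have : 2*a = 2*b := h
    omega
  have := (Real.summable_pow_div_factorial (π:ℝ)).comp_injective h2N
  simpa [Function.comp_def] using this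

lemma summable_W (m : ℕ) : Summable (fun j : ℕ => (-(π^2):ℝ)^j / ((m+2*j).factorial : ℝ)) := by
  apply Summable.of_norm_bounded summable_pi_fac
  intro j
  have hfle : ((2*j).factorial : ℝ) ≤ ((m+2*j).factorial : ℝ) :=
    Nat.cast_le.2 (Nat.factorial_le (by omega))
  have hfpos : (0:ℝ) < ((2*j).factorial : ℝ) := Nat.cast_pos.2 (Nat.factorial_pos _)
  rw [Real.norm_eq_abs, abs_div, abs_pow, abs_neg, abs_of_nonneg (sq_nonneg π),
    abs_of_nonneg (Nat.cast_nonneg _), show (π:ℝ)^(2*j) = (π^2)^j from pow_mul π 2 j]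
  exact div_le_div_of_nonneg_left (by positivity) hfpos hfle

lemma summable_T (m : ℕ) : Summable (fun j : ℕ => ((j:ℝ)+1) * (-(π^2):ℝ)^j / ((m+2*j+1).factorial : ℝ)) := by
  apply Summable.of_norm_bounded summable_pi_fac
  intro j
  have hfle : (((j:ℝ)+1) * ((2*j).factorial : ℝ)) ≤ ((m+2*j+1).factorial : ℝ) := by
    have h1 : (2*j+1).factorial ≤ (m+2*j+1).factorial := Nat.factorial_le (by omega)
    have h2 : (j+1) * (2*j).factorial ≤ (2*j+1).factorial := by
      rw [Nat.factorial_succ]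
      exact Nat.mul_le_mul_right _ (by omega)
    calc ((j:ℝ)+1) * ((2*j).factorial : ℝ) = (((j+1) * (2*j).factorial : ℕ) : ℝ) := by push_cast; ring
      _ ≤ _ := Nat.cast_le.2 (le_trans h2 h1)
  have hfpos : (0:ℝ) < ((2*j).factorial : ℝ) := Nat.cast_pos.2 (Nat.factorial_pos _)
  have hj1 : (0:ℝ) < (j:ℝ)+1 := by positivity
  rw [Real.norm_eq_abs, abs_div, abs_mul, abs_pow, abs_neg, abs_of_nonneg (sq_nonneg π),
    abs_of_nonneg (show (0:ℝ) ≤ ((m+2*j+1).factorial : ℝ) from Nat.cast_nonneg _),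
    abs_of_nonneg hj1.le,
    show (π:ℝ)^(2*j) = (π^2)^j from pow_mul π 2 j]
  rw [div_le_div_iff₀ (by positivity) hfpos]
  calc ((j:ℝ)+1) * (π^2)^j * ((2*j).factorial : ℝ) = (π^2)^j * (((j:ℝ)+1) * ((2*j).factorial : ℝ)) := by ring
    _ ≤ (π^2)^j * ((m+2*j+1).factorial : ℝ) := by
        exact mul_le_mul_of_nonneg_left hfle (by positivity)
noncomputable def Jf (k : ℕ) (θ : ℝ) : ℝ :=
  ∫ η in (0:ℝ)..(π/2), Real.arccos (Real.cos θ * Real.cos η) ^ k * Real.cos η * Real.sin η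

lemma Jf_cont (k : ℕ) : Continuous (Jf k) := by
  unfold Jf
  apply intervalIntegral.continuous_parametric_intervalIntegral_of_continuous' (μ := volume)
  show Continuous fun p : ℝ × ℝ =>
    Real.arccos (Real.cos p.1 * Real.cos p.2) ^ k * Real.cos p.2 * Real.sin p.2
  exact (((Real.continuous_arccos.comp ((Real.continuous_cos.comp continuous_fst).mul
    (Real.continuous_cos.comp continuous_snd))).pow k).mul
    (Real.continuous_cos.comp continuous_snd)).mul (Real.continuous_sin.comp continuous_snd)

theorem moment_formula_RP3 (k : ℕ) :
    momentI 2 k =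
      (1 / ((k : ℝ) + 1)) * (Real.pi / 2) ^ k *
        ( 2 * oneFtwo (((k : ℝ) + 3) / 2) (((k : ℝ) + 4) / 2) (-(Real.pi ^ 2 / 4))
          + (Real.pi ^ 2 / (((k : ℝ) + 2) * ((k : ℝ) + 3))) *
              ( oneFtwo (((k : ℝ) + 4) / 2) (((k : ℝ) + 5) / 2) (-(Real.pi ^ 2 / 4))
                - (4 / ((k : ℝ) + 4)) *
                    twoFtwo (((k : ℝ) + 5) / 2) (((k : ℝ) + 6) / 2) (-(Real.pi ^ 2 / 4)) ) ) := by
  have hπ := pi_pos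
  have hK : (0:ℝ) < π/2 := by linarith
  -- series notations
  set S : ℝ := ∑' j : ℕ, (-(π^2))^j / ((k+3+2*j).factorial : ℝ) with hS_def
  set T : ℝ := ∑' j : ℕ, ((j:ℝ)+1) * (-(π^2))^j / ((k+4+2*j).factorial : ℝ) with hT_def
  set Q : ℝ := ∑' j : ℕ, (-(π^2))^j * ((k+2).factorial : ℝ) / ((k+2+2*j).factorial : ℝ) with hQ_def
  -- summability
  have hWsum : Summable (fun j : ℕ => (-(π^2))^j * ((k+2).factorial : ℝ) / ((k+2+2*j).factorial : ℝ)) :=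
    ((summable_W (k+2)).mul_left ((k+2).factorial : ℝ)).congr (fun j => by ring)
  have hSsum : Summable (fun j : ℕ => (-(π^2):ℝ)^j / ((k+3+2*j).factorial : ℝ)) := summable_W (k+3)
  have hTsum : Summable (fun j : ℕ => ((j:ℝ)+1) * (-(π^2))^j / ((k+4+2*j).factorial : ℝ)) :=
    (summable_T (k+3)).congr (fun j => by rw [show k+3+2*j+1 = k+4+2*j from by ring])
  -- hypergeometric values
  have hQval : oneFtwo (((k:ℝ)+3)/2) (((k:ℝ)+4)/2) (-(π^2/4)) = Q := by
    have h := oneFtwo_eq_s7 (k+1)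
    have e1 : (((k+1:ℕ):ℝ)+2)/2 = ((k:ℝ)+3)/2 := by push_cast; ring
    have e2 : (((k+1:ℕ):ℝ)+3)/2 = ((k:ℝ)+4)/2 := by push_cast; ring
    rw [e1, e2] at h
    rw [h, hQ_def]
  have hSval : oneFtwo (((k:ℝ)+4)/2) (((k:ℝ)+5)/2) (-(π^2/4)) = ((k+3).factorial : ℝ) * S := by
    have h := oneFtwo_eq_s7 (k+2)
    have e1 : (((k+2:ℕ):ℝ)+2)/2 = ((k:ℝ)+4)/2 := by push_cast; ring
    have e2 : (((k+2:ℕ):ℝ)+3)/2 = ((k:ℝ)+5)/2 := by push_cast; ring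
    rw [e1, e2] at h
    rw [h, hS_def, ← tsum_mul_left]
    exact tsum_congr fun j => by
      rw [show k+2+1+2*j = k+3+2*j from by ring, show k+2+1 = k+3 from rfl]
      ring
  have hTval : twoFtwo (((k:ℝ)+5)/2) (((k:ℝ)+6)/2) (-(π^2/4)) = ((k+4).factorial : ℝ) * T := by
    have h := twoFtwo_eq (k+3)
    have e1 : (((k+3:ℕ):ℝ)+2)/2 = ((k:ℝ)+5)/2 := by push_cast; ring
    have e2 : (((k+3:ℕ):ℝ)+3)/2 = ((k:ℝ)+6)/2 := by push_cast; ring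
    rw [e1, e2] at h
    rw [h, hT_def, ← tsum_mul_left]
    exact tsum_congr fun j => by
      rw [show k+3+1+2*j = k+4+2*j from by ring, show k+3+1 = k+4 from rfl]
      ring
  -- key series identity
  have hkey : Q + π^2*((k+1).factorial : ℝ)*(S - 2*T) = 1 := by
    have hterm : ∀ j : ℕ, π^2*((k+1).factorial:ℝ) *
        ((-(π^2))^j/((k+3+2*j).factorial:ℝ) - 2*(((j:ℝ)+1)*(-(π^2))^j/((k+4+2*j).factorial:ℝ)))
        = -((-(π^2))^(j+1) * ((k+2).factorial:ℝ) / ((k+2+2*(j+1)).factorial : ℝ)) := by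
      intro j
      have hf1 : ((k+4+2*j).factorial : ℝ) = ((k+3+2*j).factorial:ℝ) * ((k:ℝ)+4+2*j) := by
        rw [show k+4+2*j = (k+3+2*j)+1 from by ring, Nat.factorial_succ]
        push_cast; ring
      have hf2 : ((k+2).factorial : ℝ) = ((k+1).factorial:ℝ)*((k:ℝ)+2) := by
        rw [show k+2 = (k+1)+1 from rfl, Nat.factorial_succ]
        push_cast; ring
      have hne1 : ((k+3+2*j).factorial:ℝ) ≠ 0 := Nat.cast_ne_zero.2 (Nat.factorial_ne_zero _)
      have hne2 : ((k:ℝ)+4+2*j) ≠ 0 := by positivity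
      rw [show k+2+2*(j+1) = k+4+2*j from by ring, hf1, hf2, pow_succ]
      field_simp
      ring
    have h2 : π^2*((k+1).factorial : ℝ)*(S - 2*T)
        = ∑' j : ℕ, -((-(π^2))^(j+1) * ((k+2).factorial:ℝ) / ((k+2+2*(j+1)).factorial : ℝ)) := by
      rw [hS_def, hT_def, ← tsum_mul_left (a := (2:ℝ)), ← Summable.tsum_sub hSsum (hTsum.mul_left 2),
        ← tsum_mul_left (a := π^2*((k+1).factorial : ℝ))]
      exact tsum_congr hterm
    have h3 : (∑' j : ℕ, -((-(π^2))^(j+1) * ((k+2).factorial:ℝ) / ((k+2+2*(j+1)).factorial : ℝ)))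
        = -(Q - 1) := by
      rw [tsum_neg]
      have h4 := Summable.tsum_eq_zero_add hWsum
      have h5 : ((-(π^2):ℝ))^0 * ((k+2).factorial:ℝ) / ((k+2+2*0).factorial : ℝ) = 1 := by
        have hne : ((k+2).factorial:ℝ) ≠ 0 := Nat.cast_ne_zero.2 (Nat.factorial_ne_zero _)
        simp [hne]
      rw [h5] at h4
      rw [← hQ_def] at h4
      rw [show (∑' j : ℕ, (-(π^2))^(j+1) * ((k+2).factorial:ℝ) / ((k+2+2*(j+1)).factorial : ℝ))
        = Q - 1 from by linarith [h4]]
    rw [h2, h3]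
    ring
  -- moment reduction
  have hm1 : momentI 2 k = (2/π) * ∫ θ in (-(π/2))..(π/2), Jf k θ := by
    unfold momentI Jf
    simp only [Nat.cast_ofNat]
    rw [intervalIntegral.integral_const, smul_eq_mul,
      show π/2 - -(π/2) = π from by ring]
    field_simp
  have hm2 : (∫ θ in (-(π/2))..(π/2), Jf k θ) = 2 * ∫ θ in (0:ℝ)..(π/2), Jf k θ := by
    have hadd := intervalIntegral.integral_add_adjacent_intervals (μ := volume)
      ((Jf_cont k).intervalIntegrable (-(π/2)) 0) ((Jf_cont k).intervalIntegrable 0 (π/2))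
    have hneg : (∫ θ in (-(π/2))..(0:ℝ), Jf k θ) = ∫ θ in (0:ℝ)..(π/2), Jf k θ := by
      have h := intervalIntegral.integral_comp_neg (a := (0:ℝ)) (b := π/2) (fun θ => Jf k θ)
      simp only [neg_zero] at h
      rw [← h]
      apply intervalIntegral.integral_congr
      intro θ _
      simp [Jf, Real.cos_neg]
    rw [← hadd, hneg]
    ring
  have hm3 : (∫ θ in (0:ℝ)..(π/2), Jf k θ) = ∫ θ in (0:ℝ)..(π/2), θ^k * Real.sin θ^2 := by
    rw [← sec_integral k]
    apply intervalIntegral.integral_congr_ae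
    have hae : ∀ᵐ θ : ℝ, θ ≠ π/2 := by
      have h1 : (volume : Measure ℝ) {π/2} = 0 := measure_singleton _
      filter_upwards [MeasureTheory.compl_mem_ae_iff.2 h1] with θ hθ
      simpa using hθ
    filter_upwards [hae] with θ hθ hmem
    rw [Set.uIoc_of_le hK.le] at hmem
    simpa [Jf] using inner_eq k ⟨hmem.1, lt_of_le_of_ne hmem.2 hθ⟩
  have hm4 : (∫ θ in (0:ℝ)..(π/2), θ^k * Real.sin θ^2)
      = (π/2)^(k+1)/(2*((k:ℝ)+1)) - vI k / 2 := by
    have hcongr : ∀ θ ∈ uIcc (0:ℝ) (π/2),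
        θ^k * Real.sin θ^2 = (1/2)*θ^k - (1/2)*(θ^k*Real.cos (2*θ)) := by
      intro θ _
      rw [Real.sin_sq_eq_half_sub]
      ring
    rw [intervalIntegral.integral_congr hcongr,
      intervalIntegral.integral_sub
        ((by fun_prop : Continuous fun θ : ℝ => (1/2)*θ^k).intervalIntegrable _ _)
        ((by fun_prop : Continuous fun θ : ℝ => (1/2)*(θ^k*Real.cos (2*θ))).intervalIntegrable _ _),
      intervalIntegral.integral_const_mul, intervalIntegral.integral_const_mul, integral_pow]
    unfold vI
    rw [zero_pow (Nat.succ_ne_zero k)]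
    have hk1 : ((k:ℝ)+1) ≠ 0 := by positivity
    push_cast
    field_simp
    ring
  have hm5 := rec2 k
  have hm6 : uI (k+1) = 2*(π/2)^(k+3)*((k+1).factorial:ℝ) * S := by
    rw [uI_eq_tsum k, hS_def]
    have hcongr : ∀ j : ℕ, aSer k j = (2*(π/2)^(k+3)*((k+1).factorial:ℝ))
        * ((-(π^2))^j/((k+3+2*j).factorial:ℝ)) := by
      intro j
      rw [aSer_eq, show k+2*j+3 = k+3+2*j from by ring]
    rw [tsum_congr hcongr, tsum_mul_left]
  -- final algebra
  rw [hm1, hm2, hm3, hm4, hQval, hSval, hTval]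
  have hvI : vI k = (2*uI (k+1) - (π/2)^(k+1))/((k:ℝ)+1) := by
    rw [eq_div_iff (by positivity : ((k:ℝ)+1) ≠ 0)]
    linear_combination hm5
  have hQ1 : Q = 1 - π^2*((k+1).factorial : ℝ)*(S - 2*T) := by linarith [hkey]
  have hfac3 : ((k+3).factorial : ℝ) = ((k+1).factorial:ℝ)*(((k:ℝ)+2)*((k:ℝ)+3)) := by
    rw [show k+3 = (k+2)+1 from rfl, Nat.factorial_succ, show k+2 = (k+1)+1 from rfl,
      Nat.factorial_succ]
    push_cast; ring
  have hfac4 : ((k+4).factorial : ℝ) = ((k+1).factorial:ℝ)*(((k:ℝ)+2)*((k:ℝ)+3)*((k:ℝ)+4)) := by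
    rw [show k+4 = (k+3)+1 from rfl, Nat.factorial_succ]
    push_cast
    rw [hfac3]
    push_cast; ring
  rw [hvI, hm6, hQ1, hfac3, hfac4]
  have e1 : (π/2:ℝ)^(k+1) = (π/2)^k * (π/2) := pow_succ _ _
  have e3 : (π/2:ℝ)^(k+3) = (π/2)^k * (π/2)^3 := by rw [pow_add]
  rw [e1, e3]
  have hk1 : ((k:ℝ)+1) ≠ 0 := by positivity
  have hk2 : ((k:ℝ)+2) ≠ 0 := by positivity
  have hk3 : ((k:ℝ)+3) ≠ 0 := by positivity
  have hk4 : ((k:ℝ)+4) ≠ 0 := by positivity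
  field_simp
  ring
end
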